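/- For any n ≥ 3 and side lengths a₁, …, aₙ > 0 with each aᵢ less than the sum of the others, there exists at most one (up to orientation-preserving isometry) convex polygon inscribed in a circle with consecutive side lengths a₁, …, aₙ; equivalently, the circumradius R of such a cyclic polygon is uniquely determined by a₁, …, aₙ. -/

import Mathlib

/-- The cross product (signed area ×2) of the triangle `P Q R` in the plane. -/
def cross2 (P Q R : EuclideanSpace ℝ (Fin 2)) : ℝ :=
  (Q 0 - P 0) * (R 1 - P 1) - (Q 1 - P 1) * (R 0 - P 0)

open Real
open Fin.NatCast

section Helpers



/-- Complexification of a planar point. -/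
def toC (P : EuclideanSpace ℝ (Fin 2)) : ℂ := ⟨P 0, P 1⟩

def fromC (z : ℂ) : EuclideanSpace ℝ (Fin 2) := !₂[z.re, z.im]

@[simp] lemma toC_fromC (z : ℂ) : toC (fromC z) = z := by
  simp [toC, fromC]

@[simp] lemma fromC_toC (P : EuclideanSpace ℝ (Fin 2)) : fromC (toC P) = P := by
  ext i
  fin_cases i <;> simp [toC, fromC]

lemma dist_toC (P Q : EuclideanSpace ℝ (Fin 2)) :
    dist P Q = ‖toC P - toC Q‖ := by
  rw [EuclideanSpace.dist_eq, Complex.norm_def, Complex.normSq_apply]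
  congr 1
  rw [Fin.sum_univ_two]
  have h : ∀ a b : ℝ, dist a b ^ 2 = (a - b) * (a - b) := by
    intro a b; rw [Real.dist_eq, sq_abs]; ring
  rw [h, h]
  simp only [toC, Complex.sub_re, Complex.sub_im]

lemma cross2_toC (P Q R : EuclideanSpace ℝ (Fin 2)) :
    cross2 P Q R = ((starRingEnd ℂ) (toC Q - toC P) * (toC R - toC P)).im := by
  simp only [cross2, toC, Complex.mul_im, map_sub, Complex.conj_re, Complex.conj_im,
    Complex.sub_re, Complex.sub_im]
  ring


lemma sin_cross_identity (α β : ℝ) :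
    sin α + sin β - sin (α + β) = 4 * (sin (α/2) * sin (β/2) * sin ((α+β)/2)) := by
  have e1 : sin α = 2 * sin (α/2) * cos (α/2) := by
    rw [show α = 2 * (α/2) by ring, sin_two_mul]; ring_nf
  have e2 : sin β = 2 * sin (β/2) * cos (β/2) := by
    rw [show β = 2 * (β/2) by ring, sin_two_mul]; ring_nf
  have e3 : sin (α + β) = 2 * sin ((α+β)/2) * cos ((α+β)/2) := by
    rw [show α + β = 2 * ((α+β)/2) by ring, sin_two_mul]; ring_nf
  have e4 : sin ((α+β)/2) = sin (α/2) * cos (β/2) + cos (α/2) * sin (β/2) := by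
    rw [show (α+β)/2 = α/2 + β/2 by ring, sin_add]
  have e5 : cos ((α+β)/2) = cos (α/2) * cos (β/2) - sin (α/2) * sin (β/2) := by
    rw [show (α+β)/2 = α/2 + β/2 by ring, cos_add]
  have p1 := sin_sq_add_cos_sq (α/2)
  have p2 := sin_sq_add_cos_sq (β/2)
  rw [e1, e2, e3, e4, e5]
  linear_combination (-2*sin (α/2)*cos (α/2)) * p2 + (-2*sin (β/2)*cos (β/2)) * p1

lemma abs_exp_mul_I_sub_one {θ : ℝ} (h0 : 0 ≤ θ) (h2 : θ ≤ 2*π) :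
    ‖Complex.exp (θ * Complex.I) - 1‖ = 2 * sin (θ/2) := by
  have hre : (Complex.exp (θ * Complex.I) - 1).re = cos θ - 1 := by simp
  have him : (Complex.exp (θ * Complex.I) - 1).im = sin θ := by simp
  rw [Complex.norm_def, Complex.normSq_apply, hre, him]
  have hcos : cos θ = 1 - 2 * sin (θ/2)^2 := by
    have h' := cos_two_mul' (θ/2)
    rw [show 2 * (θ/2) = θ by ring] at h'
    linear_combination h' + sin_sq_add_cos_sq (θ/2)
  have hsin : sin θ = 2 * sin (θ/2) * cos (θ/2) := by
    rw [show θ = 2 * (θ/2) by ring, sin_two_mul]; ring_nf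
  have hs : 0 ≤ sin (θ/2) := sin_nonneg_of_nonneg_of_le_pi (by linarith) (by linarith)
  have : (cos θ - 1) * (cos θ - 1) + sin θ * sin θ = (2 * sin (θ/2))^2 := by
    rw [hcos, hsin]
    linear_combination (4*sin (θ/2)^2) * sin_sq_add_cos_sq (θ/2)
  rw [this, sqrt_sq (by linarith)]


lemma sin_sq_add_sin_sq_le {u v : ℝ} (hu : 0 ≤ u) (hv : 0 ≤ v) (huv : u + v ≤ π/2) :
    sin u ^ 2 + sin v ^ 2 ≤ sin (u + v) ^ 2 := by
  have h1 : sin (u+v) = sin u * cos v + cos u * sin v := sin_add u v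
  have h2 : cos (u+v) = cos u * cos v - sin u * sin v := cos_add u v
  have hsu : 0 ≤ sin u := sin_nonneg_of_nonneg_of_le_pi hu (by linarith [pi_pos])
  have hsv : 0 ≤ sin v := sin_nonneg_of_nonneg_of_le_pi hv (by linarith [pi_pos])
  have hcuv : 0 ≤ cos (u+v) := cos_nonneg_of_mem_Icc ⟨by linarith, huv⟩
  have p1 := sin_sq_add_cos_sq u
  have p2 := sin_sq_add_cos_sq v
  have key : sin (u+v)^2 - sin u^2 - sin v^2 = 2 * sin u * sin v * cos (u+v) := by
    rw [h1, h2]; linear_combination (sin u^2) * p2 + (sin v^2) * p1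
  nlinarith [mul_nonneg (mul_nonneg hsu hsv) hcuv]

lemma arcsin_superadd {l u v : ℝ} (hl : 1 < l) (hu : 0 < u) (hv : 0 < v)
    (huv : u + v ≤ π/2) (h1 : l * sin (u + v) ≤ 1) :
    arcsin (l * sin u) + arcsin (l * sin v) < arcsin (l * sin (u + v)) := by
  have hl0 : (0:ℝ) < l := by linarith
  have hpi2 : (0:ℝ) < π/2 := by positivity
  have hu2 : u < π/2 := by linarith
  have hv2 : v < π/2 := by linarith
  have hsu : 0 < sin u := sin_pos_of_pos_of_lt_pi hu (by linarith [pi_pos])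
  have hsv : 0 < sin v := sin_pos_of_pos_of_lt_pi hv (by linarith [pi_pos])
  have hsuv : 0 < sin (u+v) := sin_pos_of_pos_of_lt_pi (by linarith) (by linarith [pi_pos])
  have hmono : ∀ x y : ℝ, -(π/2) ≤ x → x < y → y ≤ π/2 → sin x < sin y := by
    intro x y hx hxy hy
    exact strictMonoOn_sin ⟨hx, by linarith⟩ ⟨by linarith, hy⟩ hxy
  have hsu_lt : sin u < sin (u+v) := hmono u (u+v) (by linarith) (by linarith) huv
  have hsv_lt : sin v < sin (u+v) := hmono v (u+v) (by linarith) (by linarith) huv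
  have hlsu1 : l * sin u < 1 :=
    lt_of_lt_of_le (by exact mul_lt_mul_of_pos_left hsu_lt hl0) h1
  have hlsv1 : l * sin v < 1 :=
    lt_of_lt_of_le (by exact mul_lt_mul_of_pos_left hsv_lt hl0) h1
  have hlsu0 : 0 < l * sin u := by positivity
  have hlsv0 : 0 < l * sin v := by positivity
  have hlsuv0 : 0 < l * sin (u+v) := by positivity
  set U := arcsin (l * sin u) with hUdef
  set V := arcsin (l * sin v) with hVdef
  have hU0 : 0 < U := arcsin_pos.2 hlsu0
  have hV0 : 0 < V := arcsin_pos.2 hlsv0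
  have hU2 : U < π/2 := arcsin_lt_pi_div_two.2 hlsu1
  have hV2 : V < π/2 := arcsin_lt_pi_div_two.2 hlsv1
  have sinU : sin U = l * sin u := sin_arcsin (by linarith) (by linarith)
  have sinV : sin V = l * sin v := sin_arcsin (by linarith) (by linarith)
  have hu_lt_U : u < U := by
    have h' : sin u < l * sin u := (lt_mul_iff_one_lt_left hsu).2 hl
    have : arcsin (sin u) < arcsin (l * sin u) :=
      strictMonoOn_arcsin ⟨by linarith [neg_one_le_sin u], by linarith [sin_le_one u]⟩
        ⟨by linarith, by linarith⟩ h'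
    rwa [arcsin_sin (by linarith) (by linarith)] at this
  have hv_lt_V : v < V := by
    have h' : sin v < l * sin v := (lt_mul_iff_one_lt_left hsv).2 hl
    have : arcsin (sin v) < arcsin (l * sin v) :=
      strictMonoOn_arcsin ⟨by linarith [neg_one_le_sin v], by linarith [sin_le_one v]⟩
        ⟨by linarith, by linarith⟩ h'
    rwa [arcsin_sin (by linarith) (by linarith)] at this
  have hcosU_lt : cos U < cos u :=
    strictAntiOn_cos ⟨by linarith, by linarith [pi_pos]⟩
      ⟨by linarith, by linarith [pi_pos]⟩ hu_lt_U
  have hcosV_lt : cos V < cos v :=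
    strictAntiOn_cos ⟨by linarith, by linarith [pi_pos]⟩
      ⟨by linarith, by linarith [pi_pos]⟩ hv_lt_V
  have hcosU_pos : 0 < cos U := cos_pos_of_mem_Ioo ⟨by linarith, hU2⟩
  have hcosV_pos : 0 < cos V := cos_pos_of_mem_Ioo ⟨by linarith, hV2⟩
  have hsq : (l * sin u)^2 + (l * sin v)^2 ≤ 1 := by
    have h' := sin_sq_add_sin_sq_le hu.le hv.le huv
    have h'' : (l * sin (u+v))^2 ≤ 1 := by
      rw [show (1:ℝ) = 1^2 by norm_num]
      exact sq_le_sq' (by linarith) h1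
    nlinarith [sq_nonneg l]
  have hUV : U + V ≤ π/2 := by
    have hcosU : cos U = √(1 - (l * sin u)^2) := cos_arcsin _
    have hle : l * sin v ≤ cos U := by
      rw [hcosU, show l * sin v = √((l * sin v)^2) by rw [sqrt_sq hlsv0.le]]
      apply sqrt_le_sqrt; linarith
    have : V ≤ π/2 - U := by
      rw [hVdef, arcsin_le_iff_le_sin ⟨by linarith, by linarith⟩ ⟨by linarith, by linarith⟩,
        sin_pi_div_two_sub]
      exact hle
    linarith
  have hkey : sin (U + V) < l * sin (u + v) := by
    rw [sin_add, sin_add, sinU, sinV]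
    have e1 : (l * sin u) * cos V < (l * sin u) * cos v :=
      mul_lt_mul_of_pos_left hcosV_lt hlsu0
    have e2 : (l * sin v) * cos U < (l * sin v) * cos u :=
      mul_lt_mul_of_pos_left hcosU_lt hlsv0
    linarith
  have hfin : arcsin (sin (U+V)) < arcsin (l * sin (u+v)) :=
    strictMonoOn_arcsin ⟨by linarith [neg_one_le_sin (U+V)], by linarith [sin_le_one (U+V)]⟩
      ⟨by linarith, h1⟩ hkey
  rwa [arcsin_sin (by linarith) (by linarith)] at hfin


lemma arcsin_superadd_sum {ι : Type*} [DecidableEq ι] {l : ℝ} (hl : 1 < l) (y : ι → ℝ) :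
    ∀ s : Finset ι, s.Nonempty → (∀ i ∈ s, 0 < y i) → (∑ i ∈ s, y i) ≤ π/2 →
      l * sin (∑ i ∈ s, y i) ≤ 1 →
      ∑ i ∈ s, arcsin (l * sin (y i)) ≤ arcsin (l * sin (∑ i ∈ s, y i)) := by
  intro s
  induction s using Finset.cons_induction with
  | empty => intro h; exact absurd h (by simp)
  | cons i s his IH =>
    intro _ hpos hhalf h1
    rcases s.eq_empty_or_nonempty with rfl | hs
    · simp
    · rw [Finset.sum_cons] at hhalf h1 ⊢
      rw [Finset.sum_cons]
      have hyi : 0 < y i := hpos i (Finset.mem_cons_self i s)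
      have hspos : ∀ m ∈ s, 0 < y m := fun m hm => hpos m (Finset.mem_cons_of_mem hm)
      have hsum_pos : 0 < ∑ m ∈ s, y m := Finset.sum_pos hspos hs
      have hsum_half : (∑ m ∈ s, y m) ≤ π/2 := by linarith
      have hsin_le : sin (∑ m ∈ s, y m) ≤ sin (y i + ∑ m ∈ s, y m) := by
        apply strictMonoOn_sin.monotoneOn ⟨by linarith, hsum_half⟩
          ⟨by linarith, hhalf⟩ (by linarith)
      have h1' : l * sin (∑ m ∈ s, y m) ≤ 1 :=
        le_trans (by nlinarith) h1
      have := IH hs hspos hsum_half h1'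
      have hstep := arcsin_superadd hl hyi hsum_pos hhalf h1
      linarith

lemma arcsin_superadd_sum_strict {ι : Type*} [DecidableEq ι] {l : ℝ} (hl : 1 < l) (y : ι → ℝ)
    (s : Finset ι) (hcard : 2 ≤ s.card) (hpos : ∀ i ∈ s, 0 < y i)
    (hhalf : (∑ i ∈ s, y i) ≤ π/2) (h1 : l * sin (∑ i ∈ s, y i) ≤ 1) :
    ∑ i ∈ s, arcsin (l * sin (y i)) < arcsin (l * sin (∑ i ∈ s, y i)) := by
  obtain ⟨i, hi⟩ : s.Nonempty := Finset.card_pos.1 (by omega)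
  set s' := s.erase i with hs'
  have hins : Finset.cons i s' (Finset.notMem_erase i s) = s := by
    rw [Finset.cons_eq_insert]; exact Finset.insert_erase hi
  have hs'ne : s'.Nonempty := by
    rw [← Finset.card_pos, Finset.card_erase_of_mem hi]; omega
  have hspos : ∀ m ∈ s', 0 < y m := fun m hm => hpos m (Finset.mem_of_mem_erase hm)
  rw [← hins, Finset.sum_cons, Finset.sum_cons]
  have hyi : 0 < y i := hpos i hi
  have hsum_pos : 0 < ∑ m ∈ s', y m := Finset.sum_pos hspos hs'ne
  have hhalf' : y i + ∑ m ∈ s', y m ≤ π/2 := by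
    rw [← Finset.sum_cons (Finset.notMem_erase i s), hins]; exact hhalf
  have h1'' : l * sin (y i + ∑ m ∈ s', y m) ≤ 1 := by
    rw [← Finset.sum_cons (Finset.notMem_erase i s), hins]; exact h1
  have hsum_half : (∑ m ∈ s', y m) ≤ π/2 := by linarith
  have hsin_le : sin (∑ m ∈ s', y m) ≤ sin (y i + ∑ m ∈ s', y m) := by
    apply strictMonoOn_sin.monotoneOn ⟨by linarith, hsum_half⟩
      ⟨by linarith, hhalf'⟩ (by linarith)
  have hsin_pos : 0 < sin (∑ m ∈ s', y m) :=
    sin_pos_of_pos_of_lt_pi hsum_pos (by linarith [pi_pos])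
  have h1' : l * sin (∑ m ∈ s', y m) ≤ 1 := le_trans (by nlinarith) h1''
  have hIH := arcsin_superadd_sum hl y s' hs'ne hspos hsum_half h1'
  have hstep := arcsin_superadd hl hyi hsum_pos hhalf' h1''
  linarith


lemma third_lt {n : ℕ} (hn : 3 ≤ n) (z : Fin n → ℝ) (hz : ∀ i, 0 < z i)
    (hs : ∑ i, z i = π) {i k : Fin n} (hik : i ≠ k) : z k < π - z i := by
  have : ∃ m : Fin n, m ≠ i ∧ m ≠ k := by
    by_contra h
    push_neg at h
    have hsub : (Finset.univ : Finset (Fin n)) ⊆ {i, k} := by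
      intro m _
      rcases eq_or_ne m i with rfl | hmi
      · simp
      · simp [h m hmi]
    have h1 := Finset.card_le_card hsub
    have h2 : ({i, k} : Finset (Fin n)).card ≤ 2 := Finset.card_insert_le _ _ |>.trans (by simp)
    simp [Finset.card_univ] at h1
    omega
  obtain ⟨m, hmi, hmk⟩ := this
  have hsub : ({k, m} : Finset (Fin n)) ⊆ Finset.univ.erase i := by
    intro x hx
    simp only [Finset.mem_insert, Finset.mem_singleton] at hx
    rcases hx with rfl | rfl
    · exact Finset.mem_erase.2 ⟨hik.symm, Finset.mem_univ _⟩
    · exact Finset.mem_erase.2 ⟨hmi, Finset.mem_univ _⟩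
  have hkm : k ≠ m := fun h => hmk h.symm
  have h1 : z k + z m ≤ ∑ x ∈ Finset.univ.erase i, z x := by
    rw [← Finset.sum_pair hkm]
    exact Finset.sum_le_sum_of_subset_of_nonneg hsub (fun x _ _ => (hz x).le)
  have h2 : ∑ x ∈ Finset.univ.erase i, z x = π - z i := by
    have := Finset.sum_erase_add Finset.univ z (Finset.mem_univ i)
    rw [hs] at this; linarith
  have := hz m
  linarith

lemma no_smaller {n : ℕ} (hn : 3 ≤ n) {l : ℝ} (hl : 1 < l) (x y : Fin n → ℝ)
    (hx0 : ∀ i, 0 < x i) (hxpi : ∀ i, x i < π) (hy0 : ∀ i, 0 < y i) (hypi : ∀ i, y i < π)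
    (hsx : ∑ i, x i = π) (hsy : ∑ i, y i = π)
    (hsin : ∀ i, sin (x i) = l * sin (y i)) : False := by
  have hl0 : (0:ℝ) < l := by linarith
  have hsxpos : ∀ i, 0 < sin (x i) := fun i => sin_pos_of_pos_of_lt_pi (hx0 i) (hxpi i)
  have hsypos : ∀ i, 0 < sin (y i) := fun i => sin_pos_of_pos_of_lt_pi (hy0 i) (hypi i)
  -- there is j with x j < y j
  have hj : ∃ j, x j < y j := by
    by_contra h
    push_neg at h
    have hsum0 : ∑ i, (x i - y i) = 0 := by rw [Finset.sum_sub_distrib, hsx, hsy]; ring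
    have hall : ∀ i ∈ Finset.univ, x i - y i = 0 :=
      (Finset.sum_eq_zero_iff_of_nonneg (fun i _ => by linarith [h i])).1 hsum0
    have i0 : Fin n := ⟨0, by omega⟩
    have h0 := hall i0 (Finset.mem_univ _)
    have hx0' : x i0 = y i0 := by linarith
    have := hsin i0
    rw [hx0'] at this
    nlinarith [hsypos i0]
  obtain ⟨j, hjlt⟩ := hj
  -- y j > π/2
  have hyj : π/2 < y j := by
    by_contra h
    push_neg at h
    have h1 : sin (x j) < sin (y j) :=
      strictMonoOn_sin ⟨by linarith [hx0 j, pi_pos], by linarith⟩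
        ⟨by linarith [hy0 j, pi_pos], h⟩ hjlt
    nlinarith [hsypos j, hsin j]
  -- sines of y attain strict max at j
  have hymax : ∀ i, i ≠ j → sin (y i) < sin (y j) := by
    intro i hij
    have h1 : y i < π - y j := third_lt hn y hy0 hsy hij.symm
    have h2 : sin (y i) < sin (π - y j) :=
      strictMonoOn_sin ⟨by linarith [hy0 i], by linarith [hypi j, pi_pos]⟩
        ⟨by linarith [hypi j, pi_pos], by linarith⟩ h1
    rwa [sin_pi_sub] at h2
  -- x i < π/2 for i ≠ j
  have hxlt : ∀ i, i ≠ j → x i < π/2 := by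
    intro i hij
    by_contra h
    push_neg at h
    have h1 : x j < π - x i := third_lt hn x hx0 hsx hij
    have h2 : sin (x j) < sin (π - x i) :=
      strictMonoOn_sin ⟨by linarith [hx0 j], by linarith [hxpi i, pi_pos]⟩
        ⟨by linarith [hxpi i, pi_pos], by linarith⟩ h1
    rw [sin_pi_sub] at h2
    have h3 : sin (y j) < sin (y i) := by
      rw [hsin i, hsin j] at h2
      exact lt_of_mul_lt_mul_left h2 hl0.le
    exact absurd h3 (not_lt.2 (hymax i hij).le)
  -- the sum over erase j
  set t := π - y j with ht
  have ht0 : 0 < t := by linarith [hypi j]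
  have ht2 : t < π/2 := by linarith
  have hsumt : ∑ i ∈ Finset.univ.erase j, y i = t := by
    have := Finset.sum_erase_add Finset.univ y (Finset.mem_univ j)
    rw [hsy] at this; linarith
  have hsint : sin t = sin (y j) := by rw [ht, sin_pi_sub]
  have hlt1 : l * sin t ≤ 1 := by rw [hsint, ← hsin j]; exact sin_le_one _
  have hxeq : ∀ i ∈ Finset.univ.erase j, arcsin (l * sin (y i)) = x i := by
    intro i hi
    have hij : i ≠ j := (Finset.mem_erase.1 hi).1
    rw [← hsin i]
    exact arcsin_sin (by linarith [hx0 i, pi_pos]) (by linarith [hxlt i hij])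
  have hsumx : ∑ i ∈ Finset.univ.erase j, x i = π - x j := by
    have := Finset.sum_erase_add Finset.univ x (Finset.mem_univ j)
    rw [hsx] at this; linarith
  have hcard : 2 ≤ (Finset.univ.erase j).card := by
    rw [Finset.card_erase_of_mem (Finset.mem_univ j), Finset.card_univ, Fintype.card_fin]
    omega
  have hstrict := arcsin_superadd_sum_strict hl y (Finset.univ.erase j) hcard
    (fun i _ => hy0 i) (by rw [hsumt]; linarith) (by rw [hsumt]; exact hlt1)
  rw [Finset.sum_congr rfl hxeq, hsumx, hsumt] at hstrict
  -- arcsin (l * sin t) = arcsin (sin (x j)) ≤ π - x j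
  have harc : arcsin (l * sin t) ≤ π - x j := by
    rw [hsint, ← hsin j]
    rcases le_or_gt (x j) (π/2) with h | h
    · rw [arcsin_sin (by linarith [hx0 j, pi_pos]) h]; linarith
    · rw [← sin_pi_sub, arcsin_sin (by linarith [hxpi j]) (by linarith)]
  linarith

lemma angles_eq {n : ℕ} (hn : 3 ≤ n) (x y : Fin n → ℝ)
    (hx0 : ∀ i, 0 < x i) (hxpi : ∀ i, x i < π) (hy0 : ∀ i, 0 < y i) (hypi : ∀ i, y i < π)
    (hsx : ∑ i, x i = π) (hsy : ∑ i, y i = π)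
    (hsin : ∀ i, sin (x i) = sin (y i)) : x = y := by
  -- helper : if x j < y j then y j > π/2 and x j = π - y j
  have key : ∀ (x y : Fin n → ℝ), (∀ i, 0 < x i) → (∀ i, x i < π) →
      (∀ i, 0 < y i) → (∀ i, y i < π) → (∀ i, sin (x i) = sin (y i)) →
      ∀ j, x j < y j → π/2 < y j ∧ x j = π - y j := by
    intro x y hx0 hxpi hy0 hypi hsin j hjlt
    have h1 : π/2 < y j := by
      by_contra h
      push_neg at h
      have := strictMonoOn_sin ⟨by linarith [hx0 j, pi_pos], by linarith⟩
        ⟨by linarith [hy0 j, pi_pos], h⟩ hjlt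
      rw [hsin j] at this; exact lt_irrefl _ this
    refine ⟨h1, ?_⟩
    have hinj := strictMonoOn_sin.injOn
    have hs' : sin (x j) = sin (π - y j) := by rw [sin_pi_sub]; exact hsin j
    rcases le_or_gt (x j) (π/2) with h | h
    · have := hinj (Set.mem_Icc.2 ⟨by linarith [hx0 j, pi_pos], h⟩)
        (Set.mem_Icc.2 ⟨by linarith [hypi j], by linarith⟩) hs'
      linarith [this]
    · have hs'' : sin (π - x j) = sin (π - y j) := by rw [sin_pi_sub]; exact hs'
      have := hinj (Set.mem_Icc.2 ⟨by linarith [hxpi j], by linarith⟩)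
        (Set.mem_Icc.2 ⟨by linarith [hypi j], by linarith⟩) hs''
      linarith [this]
  by_contra hne
  have hj : ∃ j, x j < y j := by
    by_contra h
    push_neg at h
    have hsum0 : ∑ i, (x i - y i) = 0 := by rw [Finset.sum_sub_distrib, hsx, hsy]; ring
    have hall : ∀ i ∈ Finset.univ, x i - y i = 0 :=
      (Finset.sum_eq_zero_iff_of_nonneg (fun i _ => by linarith [h i])).1 hsum0
    exact hne (funext fun i => by linarith [hall i (Finset.mem_univ i)])
  have hk : ∃ k, y k < x k := by
    by_contra h
    push_neg at h
    have hsum0 : ∑ i, (y i - x i) = 0 := by rw [Finset.sum_sub_distrib, hsx, hsy]; ring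
    have hall : ∀ i ∈ Finset.univ, y i - x i = 0 :=
      (Finset.sum_eq_zero_iff_of_nonneg (fun i _ => by linarith [h i])).1 hsum0
    exact hne (funext fun i => by linarith [hall i (Finset.mem_univ i)])
  obtain ⟨j, hjlt⟩ := hj
  obtain ⟨k, hklt⟩ := hk
  obtain ⟨hyj, _⟩ := key x y hx0 hxpi hy0 hypi hsin j hjlt
  obtain ⟨hxk, _⟩ := key y x hy0 hypi hx0 hxpi (fun i => (hsin i).symm) k hklt
  have hjk : j ≠ k := by rintro rfl; linarith
  -- strict max arguments
  have hymax : ∀ i, i ≠ j → sin (y i) < sin (y j) := by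
    intro i hij
    have h1 : y i < π - y j := third_lt hn y hy0 hsy hij.symm
    have h2 : sin (y i) < sin (π - y j) :=
      strictMonoOn_sin ⟨by linarith [hy0 i], by linarith [hypi j, pi_pos]⟩
        ⟨by linarith [hypi j, pi_pos], by linarith⟩ h1
    rwa [sin_pi_sub] at h2
  have hxmax : ∀ i, i ≠ k → sin (x i) < sin (x k) := by
    intro i hik
    have h1 : x i < π - x k := third_lt hn x hx0 hsx hik.symm
    have h2 : sin (x i) < sin (π - x k) :=
      strictMonoOn_sin ⟨by linarith [hx0 i], by linarith [hxpi k, pi_pos]⟩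
        ⟨by linarith [hxpi k, pi_pos], by linarith⟩ h1
    rwa [sin_pi_sub] at h2
  have h1 : sin (x j) < sin (x k) := hxmax j hjk
  have h2 : sin (y k) < sin (y j) := hymax k hjk.symm
  rw [hsin j, hsin k] at h1
  linarith


noncomputable def rotIso (w t : ℂ) (hw : ‖w‖ = 1) :
    EuclideanSpace ℝ (Fin 2) ≃ᵢ EuclideanSpace ℝ (Fin 2) := by
  have hw0 : w ≠ 0 := by
    intro h; rw [h, norm_zero] at hw; norm_num at hw
  exact
  { toFun := fun P => fromC (t + w * toC P)
    invFun := fun P => fromC ((toC P - t) / w)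
    left_inv := by
      intro P
      show fromC ((toC (fromC (t + w * toC P)) - t) / w) = P
      rw [toC_fromC, add_sub_cancel_left, mul_comm, mul_div_assoc, div_self hw0,
        mul_one, fromC_toC]
    right_inv := by
      intro P
      show fromC (t + w * toC (fromC ((toC P - t) / w))) = P
      rw [toC_fromC, mul_div_cancel₀ _ hw0, add_sub_cancel, fromC_toC]
    isometry_toFun := by
      apply Isometry.of_dist_eq
      intro P Q
      rw [dist_toC, dist_toC, toC_fromC, toC_fromC,
        show t + w * toC P - (t + w * toC Q) = w * (toC P - toC Q) by ring,
        norm_mul, hw, one_mul] }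

lemma rotIso_apply (w t : ℂ) (hw : ‖w‖ = 1) (P : EuclideanSpace ℝ (Fin 2)) :
    rotIso w t hw P = fromC (t + w * toC P) := rfl

lemma rotIso_cross2 (w t : ℂ) (hw : ‖w‖ = 1) (P Q R : EuclideanSpace ℝ (Fin 2)) :
    cross2 (rotIso w t hw P) (rotIso w t hw Q) (rotIso w t hw R) = cross2 P Q R := by
  rw [cross2_toC, cross2_toC, rotIso_apply, rotIso_apply, rotIso_apply,
    toC_fromC, toC_fromC, toC_fromC]
  have e1 : t + w * toC Q - (t + w * toC P) = w * (toC Q - toC P) := by ring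
  have e2 : t + w * toC R - (t + w * toC P) = w * (toC R - toC P) := by ring
  rw [e1, e2, map_mul,
    show (starRingEnd ℂ) w * (starRingEnd ℂ) (toC Q - toC P) * (w * (toC R - toC P))
      = ((starRingEnd ℂ) w * w) * ((starRingEnd ℂ) (toC Q - toC P) * (toC R - toC P)) by ring]
  rw [mul_comm ((starRingEnd ℂ) w) w, Complex.mul_conj, Complex.normSq_eq_norm_sq, hw]
  norm_num


lemma conj_exp_real_mul_I (t : ℝ) :
    (starRingEnd ℂ) (Complex.exp (t * Complex.I)) = Complex.exp (-(t:ℂ) * Complex.I) := by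
  rw [← Complex.exp_conj]; congr 1; simp

lemma polygon_angles {n : ℕ} [NeZero n] (hn : 3 ≤ n)
    (a : Fin n → ℝ) (hapos : ∀ i, 0 < a i)
    (A : Fin n → EuclideanSpace ℝ (Fin 2)) (O : EuclideanSpace ℝ (Fin 2)) (R : ℝ)
    (hconv : ∀ i j k : Fin n, i < j → j < k → 0 < cross2 (A i) (A j) (A k))
    (hcirc : ∀ i, dist (A i) O = R)
    (hlen : ∀ i, dist (A i) (A (i + 1)) = a i) :
    0 < R ∧ ∃ ψ : ℕ → ℝ, ψ 0 = 0 ∧ ψ n = 2 * π ∧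
      (∀ k, 0 < ψ (k+1) - ψ k ∧ ψ (k+1) - ψ k < 2*π) ∧
      (∀ k : ℕ, toC (A ((k : ℕ) : Fin n)) - toC O
          = (toC (A 0) - toC O) * Complex.exp (ψ k * Complex.I)) ∧
      (∀ k : ℕ, a ((k : ℕ) : Fin n) = 2 * R * sin ((ψ (k+1) - ψ k)/2)) := by
  set z : ℕ → ℂ := fun k => toC (A ((k : ℕ) : Fin n)) with hzdef
  set w0 : ℂ := toC O with hw0def
  -- R positive
  have hR0 : 0 < R := by
    have h0 := hcirc 0
    have h0' : 0 ≤ R := h0 ▸ dist_nonneg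
    rcases h0'.lt_or_eq with h | h
    · exact h
    · exfalso
      have hA0 : dist (A 0) O = 0 := by rw [hcirc 0, ← h]
      have hA1 : dist (A 1) O = 0 := by rw [hcirc 1, ← h]
      have h1 := hlen 0
      rw [zero_add] at h1
      have h2 := dist_triangle (A 0) O (A 1)
      rw [dist_comm O (A 1)] at h2
      linarith [hapos 0]
  have habs : ∀ k : ℕ, ‖z k - w0‖ = R := by
    intro k; rw [hzdef, hw0def, ← dist_toC]; exact hcirc _
  have hne : ∀ k : ℕ, z k - w0 ≠ 0 := by
    intro k h
    have h1 := habs k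
    rw [h, norm_zero] at h1
    linarith
  have hcast : ∀ k : ℕ, (((k+1 : ℕ)) : Fin n) = ((k : ℕ) : Fin n) + 1 := by
    intro k; push_cast; ring
  have hzsucc : ∀ k : ℕ, z (k+1) ≠ z k := by
    intro k h
    have hl := hlen ((k : ℕ) : Fin n)
    rw [dist_toC] at hl
    have e1 : toC (A (((k : ℕ) : Fin n) + 1)) = z (k+1) := by rw [hzdef, ← hcast]
    rw [e1, h] at hl
    simp [hzdef] at hl
    have := hapos ((k : ℕ) : Fin n)
    rw [← hl] at this
    exact lt_irrefl _ this
  set r : ℕ → ℂ := fun k => (z (k+1) - w0) / (z k - w0) with hrdef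
  have habsr : ∀ k, ‖r k‖ = 1 := by
    intro k; rw [hrdef]; simp only [norm_div]; rw [habs, habs, div_self hR0.ne']
  have hrm : ∀ k, z (k+1) - w0 = r k * (z k - w0) := by
    intro k; rw [hrdef]; dsimp only; rw [div_mul_cancel₀ _ (hne k)]
  have hrne1 : ∀ k, r k ≠ 1 := by
    intro k h
    have h1 := hrm k
    rw [h, one_mul] at h1
    exact hzsucc k (by linear_combination h1)
  set θ : ℕ → ℝ := fun k => if 0 < (r k).arg then (r k).arg else (r k).arg + 2*π with hθdef
  have hargne : ∀ k, (r k).arg ≠ 0 := by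
    intro k h
    obtain ⟨hre, him⟩ := Complex.arg_eq_zero_iff.1 h
    have hrr : r k = (((r k).re : ℝ) : ℂ) := Complex.ext rfl (by simpa using him)
    have h1 := habsr k
    rw [hrr, Complex.norm_real, Real.norm_eq_abs, abs_of_nonneg hre] at h1
    exact hrne1 k (by rw [hrr, h1]; norm_num)
  have hθb : ∀ k, 0 < θ k ∧ θ k < 2*π := by
    intro k
    have h1 := Complex.arg_le_pi (r k)
    have h2 := Complex.neg_pi_lt_arg (r k)
    have h3 := hargne k
    have hπ := pi_pos
    rw [hθdef]
    dsimp only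
    split_ifs with h
    · constructor <;> linarith
    · constructor <;> [linarith; (cases lt_or_eq_of_le (not_lt.1 h) with
        | inl h' => linarith
        | inr h' => exact absurd h' h3)]
  have hexp : ∀ k, Complex.exp ((θ k : ℝ) * Complex.I) = r k := by
    intro k
    have base := Complex.norm_mul_exp_arg_mul_I (r k)
    rw [habsr k, Complex.ofReal_one, one_mul] at base
    rw [hθdef]
    dsimp only
    split_ifs with h
    · exact base
    · rw [Complex.ofReal_add, add_mul, Complex.exp_add, base]
      rw [show ((2*π : ℝ) : ℂ) * Complex.I = 2*(π:ℂ)*Complex.I by push_cast; ring]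
      rw [Complex.exp_two_pi_mul_I, mul_one]
  set ψ : ℕ → ℝ := fun k => ∑ i ∈ Finset.range k, θ i with hψdef
  have hψ0 : ψ 0 = 0 := by rw [hψdef]; simp
  have hψs : ∀ k, ψ (k+1) = ψ k + θ k := by
    intro k; rw [hψdef]; exact Finset.sum_range_succ θ k
  have hstep : ∀ k, 0 < ψ (k+1) - ψ k ∧ ψ (k+1) - ψ k < 2*π := by
    intro k; rw [hψs]
    constructor <;> [linarith [(hθb k).1]; linarith [(hθb k).2]]
  have hψpos : ∀ k, 1 ≤ k → 0 < ψ k := by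
    intro k hk
    rw [hψdef]
    exact Finset.sum_pos (fun i _ => (hθb i).1) (Finset.nonempty_range_iff.2 (by omega))
  have hzψ : ∀ k, z k - w0 = (z 0 - w0) * Complex.exp ((ψ k : ℝ) * Complex.I) := by
    intro k
    induction k with
    | zero => rw [hψ0]; simp
    | succ m ih =>
        rw [hrm m, ih, hψs, ← hexp m, Complex.ofReal_add, add_mul, Complex.exp_add]
        ring
  have hchord : ∀ k : ℕ, a ((k : ℕ) : Fin n) = 2 * R * sin ((ψ (k+1) - ψ k)/2) := by
    intro k
    have hl := hlen ((k : ℕ) : Fin n)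
    rw [dist_toC] at hl
    have e1 : toC (A (((k : ℕ) : Fin n) + 1)) = z (k+1) := by rw [hzdef, ← hcast]
    rw [e1] at hl
    have e2 : (z k : ℂ) - z (k+1) = -((z k - w0) * (r k - 1)) := by
      linear_combination - hrm k
    have e3 : toC (A ((k : ℕ) : Fin n)) = z k := by rw [hzdef]
    rw [e3, e2, norm_neg, norm_mul, habs, ← hexp k,
      abs_exp_mul_I_sub_one (hθb k).1.le (hθb k).2.le] at hl
    rw [hψs, show ψ k + θ k - ψ k = θ k by ring]
    linarith [hl]
  have hcross : ∀ p q s : ℕ,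
      cross2 (A ((p : ℕ) : Fin n)) (A ((q : ℕ) : Fin n)) (A ((s : ℕ) : Fin n))
      = R^2 * (4 * (sin ((ψ q - ψ p)/2) * sin ((ψ s - ψ q)/2) * sin ((ψ s - ψ p)/2))) := by
    intro p q s
    rw [cross2_toC]
    have eq1 : toC (A ((q : ℕ) : Fin n)) - toC (A ((p : ℕ) : Fin n))
        = (z 0 - w0) * (Complex.exp ((ψ q : ℝ) * Complex.I) - Complex.exp ((ψ p : ℝ) * Complex.I)) := by
      have h1 := hzψ q
      have h2 := hzψ p
      rw [hzdef] at h1 h2 ⊢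
      dsimp only at h1 h2 ⊢
      linear_combination h1 - h2
    have eq2 : toC (A ((s : ℕ) : Fin n)) - toC (A ((p : ℕ) : Fin n))
        = (z 0 - w0) * (Complex.exp ((ψ s : ℝ) * Complex.I) - Complex.exp ((ψ p : ℝ) * Complex.I)) := by
      have h1 := hzψ s
      have h2 := hzψ p
      rw [hzdef] at h1 h2 ⊢
      dsimp only at h1 h2 ⊢
      linear_combination h1 - h2
    rw [eq1, eq2, map_mul, show ∀ (u v x y : ℂ), u * v * (x * y) = (u * x) * (v * y) from
      fun u v x y => by ring]
    have hconj : (starRingEnd ℂ) (z 0 - w0) * (z 0 - w0) = ((R^2 : ℝ) : ℂ) := by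
      rw [mul_comm, Complex.mul_conj, Complex.normSq_eq_norm_sq, habs]
    rw [hconj]
    have hE : ∀ t : ℝ, Complex.exp ((t : ℝ) * Complex.I)
        = Complex.ofReal (cos t) + Complex.ofReal (sin t) * Complex.I := by
      intro t
      rw [Complex.exp_mul_I, Complex.ofReal_cos, Complex.ofReal_sin]
    rw [hE, hE, hE]
    have him : ((starRingEnd ℂ) ((cos (ψ q) : ℂ) + (sin (ψ q) : ℂ) * Complex.I
          - ((cos (ψ p) : ℂ) + (sin (ψ p) : ℂ) * Complex.I))
        * ((cos (ψ s) : ℂ) + (sin (ψ s) : ℂ) * Complex.I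
          - ((cos (ψ p) : ℂ) + (sin (ψ p) : ℂ) * Complex.I))).im
        = (cos (ψ q) - cos (ψ p)) * (sin (ψ s) - sin (ψ p))
          - (sin (ψ q) - sin (ψ p)) * (cos (ψ s) - cos (ψ p)) := by
      simp only [map_sub, map_add, map_mul, Complex.conj_ofReal, Complex.conj_I,
        Complex.mul_im, Complex.sub_im, Complex.sub_re, Complex.add_im, Complex.add_re,
        Complex.ofReal_re, Complex.ofReal_im, Complex.mul_re, Complex.I_re, Complex.I_im,
        Complex.neg_im, Complex.neg_re]
      ring
    rw [show ∀ (c : ℝ) (w : ℂ), ((c:ℂ) * w).im = c * w.im from fun c w => by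
      simp [Complex.mul_im], him]
    congr 1
    have hid := sin_cross_identity (ψ q - ψ p) (ψ s - ψ q)
    rw [show ψ q - ψ p + (ψ s - ψ q) = ψ s - ψ p by ring] at hid
    rw [← hid, sin_sub, sin_sub, sin_sub]
    ring
  -- winding number is 1
  have hψlt : ∀ k, 1 ≤ k → k ≤ n - 1 → ψ k < 2*π := by
    intro k
    induction k using Nat.strong_induction_on with
    | _ k IH =>
      intro hk1 hkn
      rcases eq_or_lt_of_le hk1 with h1 | hk2
      · subst h1
        have := (hθb 0).2
        have e : ψ 1 = θ 0 := by rw [show (1:ℕ) = 0+1 from rfl, hψs 0, hψ0]; ring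
        linarith [e ▸ this]
      · by_contra hcon
        push_neg at hcon
        have hprev : ψ (k-1) < 2*π := IH (k-1) (by omega) (by omega) (by omega)
        have hprevpos : 0 < ψ (k-1) := hψpos (k-1) (by omega)
        have f1 : ((0:ℕ) : Fin n) < (((k-1:ℕ)) : Fin n) := by
          rw [Fin.lt_def, Fin.val_cast_of_lt (show k-1 < n by omega),
            Fin.val_cast_of_lt (show 0 < n by omega)]
          omega
        have f2 : (((k-1:ℕ)) : Fin n) < ((k : ℕ) : Fin n) := by
          rw [Fin.lt_def, Fin.val_cast_of_lt (show k-1 < n by omega),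
            Fin.val_cast_of_lt (show k < n by omega)]
          omega
        have hc := hconv _ _ _ f1 f2
        rw [hcross 0 (k-1) k, hψ0] at hc
        have hsucc : k - 1 + 1 = k := by omega
        have hst := hstep (k-1)
        rw [hsucc] at hst
        have s1 : 0 < sin ((ψ (k-1) - 0)/2) := by
          apply sin_pos_of_pos_of_lt_pi <;> [linarith; linarith]
        have s2 : 0 < sin ((ψ k - ψ (k-1))/2) := by
          apply sin_pos_of_pos_of_lt_pi <;> [linarith [hst.1]; linarith [hst.2]]
        have s3 : sin ((ψ k - 0)/2) ≤ 0 := by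
          have hub : ψ k < 4*π := by linarith [hst.2]
          have h4 : 0 ≤ (ψ k - 0)/2 - π := by linarith
          have h5 : (ψ k - 0)/2 - π ≤ π := by linarith
          have := sin_nonneg_of_nonneg_of_le_pi h4 h5
          rw [Real.sin_sub_pi] at this
          linarith
        have hpr : sin ((ψ (k-1) - 0)/2) * sin ((ψ k - ψ (k-1))/2) * sin ((ψ k - 0)/2) ≤ 0 :=
          mul_nonpos_of_nonneg_of_nonpos (mul_nonneg s1.le s2.le) s3
        have hfin : R^2 * (4 * (sin ((ψ (k-1) - 0)/2) * sin ((ψ k - ψ (k-1))/2)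
            * sin ((ψ k - 0)/2))) ≤ 0 :=
          mul_nonpos_of_nonneg_of_nonpos (sq_nonneg R) (by linarith)
        linarith
  have hψn : ψ n = 2 * π := by
    have hzn : z n = z 0 := by
      rw [hzdef]
      dsimp only
      rw [Fin.natCast_self, Nat.cast_zero]
    have he : Complex.exp ((ψ n : ℝ) * Complex.I) = 1 := by
      have h1 := hzψ n
      rw [hzn] at h1
      apply mul_left_cancel₀ (hne 0)
      rw [mul_one, ← h1]
    obtain ⟨m, hm⟩ := Complex.exp_eq_one_iff.1 he
    have hmr : ψ n = m * (2*π) := by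
      have h2 : ((ψ n : ℝ) : ℂ) = (((m : ℝ) * (2*π) : ℝ) : ℂ) := by
        apply mul_right_cancel₀ Complex.I_ne_zero
        push_cast
        linear_combination hm
      exact_mod_cast h2
    have hub : ψ n < 4*π := by
      have h3 := hψlt (n-1) (by omega) (le_refl _)
      have hst := hstep (n-1)
      rw [show n-1+1 = n from by omega] at hst
      linarith [hst.2]
    have hlb : 0 < ψ n := hψpos n (by omega)
    have hm1 : m = 1 := by
      have hπ := pi_pos
      have h1 : (0:ℝ) < (m:ℝ) := by nlinarith [hmr ▸ hlb]
      have h2 : (m:ℝ) < 2 := by nlinarith [hmr ▸ hub]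
      have h1' : (0:ℤ) < m := by exact_mod_cast h1
      have h2' : (m:ℤ) < 2 := by exact_mod_cast h2
      omega
    rw [hmr, hm1]
    push_cast
    ring
  refine ⟨hR0, ψ, hψ0, hψn, hstep, ?_, hchord⟩
  intro k
  have := hzψ k
  rw [hzdef, hw0def] at this
  dsimp only at this
  rw [this]
  norm_num [hw0def]


end Helpers

/-- Uniqueness of cyclic polygons: two convex polygons inscribed in circles (vertices
listed counterclockwise) with the same consecutive side lengths `a₁, …, aₙ` (positive,
each less than the sum of the others) have the same circumradius and are congruent by
an orientation-preserving isometry. -/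
theorem cyclic_polygon_unique (n : ℕ) [NeZero n] (hn : 3 ≤ n) (a : Fin n → ℝ)
    (hapos : ∀ i, 0 < a i) (hpoly : ∀ j, a j < ∑ i ∈ Finset.univ.erase j, a i)
    (A B : Fin n → EuclideanSpace ℝ (Fin 2)) (O₁ O₂ : EuclideanSpace ℝ (Fin 2))
    (R₁ R₂ : ℝ)
    (hAconv : ∀ i j k : Fin n, i < j → j < k → 0 < cross2 (A i) (A j) (A k))
    (hBconv : ∀ i j k : Fin n, i < j → j < k → 0 < cross2 (B i) (B j) (B k))
    (hAcirc : ∀ i, dist (A i) O₁ = R₁) (hBcirc : ∀ i, dist (B i) O₂ = R₂)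
    (hAlen : ∀ i, dist (A i) (A (i + 1)) = a i)
    (hBlen : ∀ i, dist (B i) (B (i + 1)) = a i) :
    R₁ = R₂ ∧
      ∃ f : EuclideanSpace ℝ (Fin 2) ≃ᵢ EuclideanSpace ℝ (Fin 2),
        (∀ P Q R, cross2 (f P) (f Q) (f R) = cross2 P Q R) ∧ ∀ i, f (A i) = B i := by
  obtain ⟨hR1, ψA, hA0, hAn, hAstep, hAz, hAchord⟩ :=
    polygon_angles hn a hapos A O₁ R₁ hAconv hAcirc hAlen
  obtain ⟨hR2, ψB, hB0, hBn, hBstep, hBz, hBchord⟩ :=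
    polygon_angles hn a hapos B O₂ R₂ hBconv hBcirc hBlen
  have hπ := pi_pos
  set x : Fin n → ℝ := fun i => (ψA (i.val + 1) - ψA i.val)/2 with hxdef
  set y : Fin n → ℝ := fun i => (ψB (i.val + 1) - ψB i.val)/2 with hydef
  have hx0 : ∀ i, 0 < x i := fun i => by
    rw [hxdef]; dsimp only; linarith [(hAstep i.val).1]
  have hxpi : ∀ i, x i < π := fun i => by
    rw [hxdef]; dsimp only; linarith [(hAstep i.val).2]
  have hy0 : ∀ i, 0 < y i := fun i => by
    rw [hydef]; dsimp only; linarith [(hBstep i.val).1]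
  have hypi : ∀ i, y i < π := fun i => by
    rw [hydef]; dsimp only; linarith [(hBstep i.val).2]
  have hsum : ∀ (ψ : ℕ → ℝ), ψ 0 = 0 → ψ n = 2*π →
      ∑ k ∈ Finset.range n, (ψ (k+1) - ψ k)/2 = π := by
    intro ψ h0 hn'
    rw [← Finset.sum_div, Finset.sum_range_sub ψ n, h0, hn']
    ring
  have hsx : ∑ i, x i = π := by
    rw [hxdef]
    rw [show (∑ i : Fin n, (ψA (i.val + 1) - ψA i.val)/2)
      = ∑ k ∈ Finset.range n, (ψA (k+1) - ψA k)/2 from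
      Fin.sum_univ_eq_sum_range (fun k => (ψA (k+1) - ψA k)/2) n]
    exact hsum ψA hA0 hAn
  have hsy : ∑ i, y i = π := by
    rw [hydef]
    rw [show (∑ i : Fin n, (ψB (i.val + 1) - ψB i.val)/2)
      = ∑ k ∈ Finset.range n, (ψB (k+1) - ψB k)/2 from
      Fin.sum_univ_eq_sum_range (fun k => (ψB (k+1) - ψB k)/2) n]
    exact hsum ψB hB0 hBn
  have hax : ∀ i, a i = 2 * R₁ * sin (x i) := fun i => by
    have h := hAchord i.val
    rw [Fin.cast_val_eq_self] at h
    exact h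
  have hay : ∀ i, a i = 2 * R₂ * sin (y i) := fun i => by
    have h := hBchord i.val
    rw [Fin.cast_val_eq_self] at h
    exact h
  have hRR : R₁ = R₂ := by
    rcases lt_trichotomy R₁ R₂ with h | h | h
    · exfalso
      apply no_smaller hn (l := R₂/R₁) ((one_lt_div hR1).2 h) x y hx0 hxpi hy0 hypi hsx hsy
      intro i
      have key : 2 * R₁ * sin (x i) = 2 * R₂ * sin (y i) := by rw [← hax i, ← hay i]
      field_simp
      linear_combination key / 2
    · exact h
    · exfalso
      apply no_smaller hn (l := R₁/R₂) ((one_lt_div hR2).2 h) y x hy0 hypi hx0 hxpi hsy hsx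
      intro i
      have key : 2 * R₁ * sin (x i) = 2 * R₂ * sin (y i) := by rw [← hax i, ← hay i]
      field_simp
      linear_combination - key / 2
  have hsineq : ∀ i, sin (x i) = sin (y i) := by
    intro i
    have key : 2 * R₁ * sin (x i) = 2 * R₁ * sin (y i) := by
      rw [← hax i, hRR, ← hay i]
    have h2 : (2 * R₁ : ℝ) ≠ 0 := by positivity
    exact mul_left_cancel₀ h2 key
  have hxy : x = y := angles_eq hn x y hx0 hxpi hy0 hypi hsx hsy hsineq
  have hψeq : ∀ k, k ≤ n → ψA k = ψB k := by
    intro k hk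
    induction k with
    | zero => rw [hA0, hB0]
    | succ m ih =>
      have hm : m < n := by omega
      have h1 := congrFun hxy ⟨m, hm⟩
      rw [hxdef, hydef] at h1
      dsimp only at h1
      have h2 := ih (by omega)
      linarith
  have hA0abs : ‖toC (A 0) - toC O₁‖ = R₁ := by rw [← dist_toC]; exact hAcirc 0
  have hB0abs : ‖toC (B 0) - toC O₂‖ = R₂ := by rw [← dist_toC]; exact hBcirc 0
  have hA0ne : toC (A 0) - toC O₁ ≠ 0 := by
    intro h; rw [h, norm_zero] at hA0abs; linarith
  set w : ℂ := (toC (B 0) - toC O₂) / (toC (A 0) - toC O₁) with hwdef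
  have habsw : ‖w‖ = 1 := by
    rw [hwdef, norm_div, hA0abs, hB0abs, ← hRR, div_self hR1.ne']
  set t : ℂ := toC O₂ - w * toC O₁ with htdef
  have hwA : w * (toC (A 0) - toC O₁) = toC (B 0) - toC O₂ := by
    rw [hwdef]; exact div_mul_cancel₀ _ hA0ne
  refine ⟨hRR, rotIso w t habsw, rotIso_cross2 w t habsw, ?_⟩
  intro i
  rw [rotIso_apply]
  have h1 := hAz i.val
  have h2 := hBz i.val
  rw [Fin.cast_val_eq_self] at h1 h2
  rw [hψeq i.val (le_of_lt i.isLt)] at h1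
  have hfin : t + w * toC (A i) = toC (B i) := by
    rw [htdef]
    linear_combination w * h1 - h2 + Complex.exp ((ψB i.val : ℝ) * Complex.I) * hwA
  rw [hfin, fromC_toC]
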